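/- Let α, β ∈ ℝ be such that 1, α, β are linearly independent over ℚ, let ρ : 𝕋¹ → ℂ be continuous, and define ρ_n : 𝕋¹ → ℂ by ρ_n(x) = Σ_{k=0}^{n−1} e^{2πi(n−k−1)β} ρ(x + kα) (so that F^n(x,z) = (x + nα, e^{2πinβ} z + ρ_n(x)) for the map F(x,z) = (x + α, e^{2πiβ} z + ρ(x)) on 𝕋¹ × ℂ). Then F has zero drift: sup_{x∈𝕋¹} |ρ_n(x)|/n → 0 as n → +∞. -/

import Mathlib

open Real

private lemma fourier_add_arg {T : ℝ} (m : ℤ) (x y : AddCircle T) :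
    fourier m (x + y) = fourier m x * fourier m y := by
  simp_rw [fourier_apply, smul_add, AddCircle.toCircle_add, Circle.coe_mul]

private lemma fourier_nsmul_arg {T : ℝ} (m : ℤ) (a : AddCircle T) (k : ℕ) :
    fourier m ((k : ℕ) • a) = (fourier m a) ^ k := by
  induction k with
  | zero => simpa using fourier_eval_zero m
  | succ k ih => rw [succ_nsmul, fourier_add_arg, ih, pow_succ]

private lemma ratio_ne_one (α β : ℝ) (hindep : LinearIndependent ℚ ![(1 : ℝ), α, β]) (m : ℤ) :
    Complex.exp (-(2 * π * Complex.I * β)) * fourier m ((α : ℝ) : AddCircle (1:ℝ)) ≠ 1 := by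
  intro h
  rw [fourier_coe_apply, ← Complex.exp_add] at h
  have h' : Complex.exp (2 * π * Complex.I * ((m : ℂ) * α - β)) = 1 := by
    rw [← h]; congr 1; push_cast; field_simp; ring
  rw [Complex.exp_eq_one_iff] at h'
  obtain ⟨j, hj⟩ := h'
  have h2 : (2 * π * Complex.I) ≠ 0 := by
    simp [Real.pi_ne_zero, Complex.I_ne_zero]
  have hj' : ((m : ℂ) * α - β) = (j : ℂ) := by
    have := mul_left_cancel₀ h2 (by rw [hj]; ring : 2 * π * Complex.I * ((m:ℂ) * α - β)
      = 2 * π * Complex.I * (j : ℂ))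
    exact this
  have hre : (m : ℝ) * α - β = (j : ℝ) := by
    exact_mod_cast congrArg Complex.re hj'
  have := Fintype.linearIndependent_iff.mp hindep ![(j : ℚ), -(m : ℚ), 1] (by
    simp [Fin.sum_univ_three, Rat.smul_def]
    push_cast
    linarith [hre])
  simpa using this 2

private lemma span_bound (α β : ℝ) (hindep : LinearIndependent ℚ ![(1 : ℝ), α, β])
    (P : C(AddCircle (1:ℝ), ℂ)) (hP : P ∈ Submodule.span ℂ (Set.range (fourier (T := (1:ℝ))))) :
    ∃ C : ℝ, ∀ (n : ℕ) (x : AddCircle (1:ℝ)),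
      ‖∑ k ∈ Finset.range n,
        (Complex.exp (-(2 * π * Complex.I * β)))^k * P (x + k • ((α : ℝ) : AddCircle (1:ℝ)))‖ ≤ C := by
  induction hP using Submodule.span_induction with
  | mem P hPm =>
      obtain ⟨m, rfl⟩ := hPm
      set u : ℂ := Complex.exp (-(2 * π * Complex.I * β)) with hu
      set r : ℂ := u * fourier m ((α : ℝ) : AddCircle (1:ℝ)) with hr
      have hr1 : r ≠ 1 := ratio_ne_one α β hindep m
      refine ⟨2 / ‖r - 1‖, fun n x => ?_⟩
      have hsum : ∑ k ∈ Finset.range n, u^k * fourier m (x + k • ((α : ℝ) : AddCircle (1:ℝ)))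
          = (∑ k ∈ Finset.range n, r^k) * fourier m x := by
        rw [Finset.sum_mul]
        refine Finset.sum_congr rfl fun k _ => ?_
        rw [fourier_add_arg, fourier_nsmul_arg, hr, mul_pow]
        ring
      rw [hsum, norm_mul, geom_sum_eq hr1]
      have habsf : ‖fourier m x‖ = 1 := by
        rw [fourier_apply]; exact Circle.norm_coe _
      have habsr : ‖r‖ = 1 := by
        rw [hr, norm_mul, fourier_apply, Circle.norm_coe, hu, Complex.norm_exp]
        simp
      rw [habsf, mul_one, norm_div]
      gcongr
      calc ‖r ^ n - 1‖ ≤ ‖r ^ n‖ + 1 := by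
            simpa using norm_sub_le (r ^ n) 1
        _ = 2 := by rw [norm_pow, habsr, one_pow]; norm_num
  | zero => exact ⟨0, fun n x => by simp⟩
  | add P Q _ _ ihP ihQ =>
      obtain ⟨C, hC⟩ := ihP; obtain ⟨D, hD⟩ := ihQ
      refine ⟨C + D, fun n x => ?_⟩
      calc ‖_‖ ≤ _ + _ := by
            rw [show (∑ k ∈ Finset.range n, (Complex.exp (-(2 * π * Complex.I * β)))^k *
                (P + Q) (x + k • ((α : ℝ) : AddCircle (1:ℝ)))) =
              (∑ k ∈ Finset.range n, (Complex.exp (-(2 * π * Complex.I * β)))^k *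
                P (x + k • ((α : ℝ) : AddCircle (1:ℝ)))) +
              (∑ k ∈ Finset.range n, (Complex.exp (-(2 * π * Complex.I * β)))^k *
                Q (x + k • ((α : ℝ) : AddCircle (1:ℝ)))) by
                rw [← Finset.sum_add_distrib]
                refine Finset.sum_congr rfl fun k _ => ?_
                simp [mul_add]]
            exact norm_add_le _ _
        _ ≤ C + D := add_le_add (hC n x) (hD n x)
  | smul c P _ ihP =>
      obtain ⟨C, hC⟩ := ihP
      refine ⟨‖c‖ * C, fun n x => ?_⟩
      have : (∑ k ∈ Finset.range n, (Complex.exp (-(2 * π * Complex.I * β)))^k *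
          (c • P) (x + k • ((α : ℝ) : AddCircle (1:ℝ)))) =
          c * ∑ k ∈ Finset.range n, (Complex.exp (-(2 * π * Complex.I * β)))^k *
            P (x + k • ((α : ℝ) : AddCircle (1:ℝ))) := by
        rw [Finset.mul_sum]
        refine Finset.sum_congr rfl fun k _ => ?_
        simp [smul_eq_mul]; ring
      rw [this, norm_mul]
      exact mul_le_mul_of_nonneg_left (hC n x) (norm_nonneg c)

theorem vortex_zero_drift
    (α β : ℝ) (hindep : LinearIndependent ℚ ![(1 : ℝ), α, β])
    (ρ : AddCircle (1 : ℝ) → ℂ) (hρ : Continuous ρ) :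
    ∀ ε : ℝ, 0 < ε → ∃ N : ℕ, ∀ n : ℕ, N ≤ n → ∀ x : AddCircle (1 : ℝ),
      ‖∑ k ∈ Finset.range n,
        Complex.exp (2 * π * Complex.I * (((n : ℂ) - (k : ℂ) - 1) * (β : ℂ))) *
          ρ (x + k • (α : AddCircle (1 : ℝ)))‖ / (n : ℝ) < ε := by
  intro ε hε
  set ρc : C(AddCircle (1:ℝ), ℂ) := ⟨ρ, hρ⟩ with hρc
  have hmem : ρc ∈ closure ((Submodule.span ℂ (Set.range (fourier (T := (1:ℝ))))) :
      Set C(AddCircle (1:ℝ), ℂ)) := by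
    rw [← Submodule.topologicalClosure_coe, span_fourier_closure_eq_top]
    trivial
  obtain ⟨P, hPspan, hPdist⟩ := Metric.mem_closure_iff.mp hmem (ε/2) (by linarith)
  obtain ⟨C, hC⟩ := span_bound α β hindep P hPspan
  have hC0 : 0 ≤ C := le_trans (by simp) (hC 0 0)
  set d : ℝ := ‖ρc - P‖ with hd
  have hdlt : d < ε / 2 := by rwa [hd, ← dist_eq_norm]
  have hd0 : 0 ≤ d := norm_nonneg _
  refine ⟨⌈2 * C / ε⌉₊ + 1, fun n hn x => ?_⟩
  have hn1 : 1 ≤ n := le_trans (Nat.le_add_left 1 _) hn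
  have hnpos : (0:ℝ) < n := by exact_mod_cast hn1
  set u : ℂ := Complex.exp (-(2 * π * Complex.I * β)) with hu
  have habsu : ‖u‖ = 1 := by rw [hu, Complex.norm_exp]; simp
  -- rewrite the sum
  have hrw : (∑ k ∈ Finset.range n,
        Complex.exp (2 * π * Complex.I * (((n : ℂ) - (k : ℂ) - 1) * (β : ℂ))) *
          ρ (x + k • (α : AddCircle (1 : ℝ))))
      = Complex.exp (2 * π * Complex.I * (((n : ℂ) - 1) * β)) *
        ∑ k ∈ Finset.range n, u^k * ρ (x + k • (α : AddCircle (1 : ℝ))) := by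
    rw [Finset.mul_sum]
    refine Finset.sum_congr rfl fun k _ => ?_
    rw [hu, ← Complex.exp_nat_mul]
    rw [show Complex.exp (2 * ↑π * Complex.I * (((n:ℂ) - (k:ℂ) - 1) * (β:ℂ)))
        = Complex.exp (2 * ↑π * Complex.I * (((n:ℂ) - 1) * (β:ℂ))) *
          Complex.exp ((k:ℂ) * -(2 * ↑π * Complex.I * (β:ℂ))) by
      rw [← Complex.exp_add]; congr 1; push_cast; ring]
    ring
  rw [hrw, norm_mul, Complex.norm_exp]
  have : (2 * π * Complex.I * (((n : ℂ) - 1) * β)).re = 0 := by simp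
  rw [this, Real.exp_zero, one_mul]
  -- split ρ = P + (ρ - P)
  have hsplit : (∑ k ∈ Finset.range n, u^k * ρ (x + k • (α : AddCircle (1 : ℝ))))
      = (∑ k ∈ Finset.range n, u^k * P (x + k • (α : AddCircle (1 : ℝ))))
      + (∑ k ∈ Finset.range n, u^k * (ρc - P) (x + k • (α : AddCircle (1 : ℝ)))) := by
    rw [← Finset.sum_add_distrib]
    refine Finset.sum_congr rfl fun k _ => ?_
    simp only [ContinuousMap.sub_apply, hρc, ContinuousMap.coe_mk]
    ring
  have hbound : ‖∑ k ∈ Finset.range n,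
      u^k * ρ (x + k • (α : AddCircle (1 : ℝ)))‖ ≤ C + n * d := by
    rw [hsplit]
    refine le_trans (norm_add_le _ _) (add_le_add (hC n x) ?_)
    calc ‖∑ k ∈ Finset.range n, u^k * (ρc - P) (x + k • (α : AddCircle (1 : ℝ)))‖
        ≤ ∑ k ∈ Finset.range n, ‖u^k * (ρc - P) (x + k • (α : AddCircle (1 : ℝ)))‖ :=
          norm_sum_le _ _
      _ ≤ ∑ k ∈ Finset.range n, d := by
          refine Finset.sum_le_sum fun k _ => ?_
          rw [norm_mul, norm_pow, habsu, one_pow, one_mul]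
          exact ContinuousMap.norm_coe_le_norm _ _
      _ = n * d := by rw [Finset.sum_const, Finset.card_range, nsmul_eq_mul]
  have hCn : C / n < ε / 2 := by
    rw [div_lt_iff₀ hnpos]
    have hN : (2 * C / ε) < n := by
      have h1 : (⌈2 * C / ε⌉₊ : ℝ) < n := by
        exact_mod_cast lt_of_lt_of_le (Nat.lt_succ_self _) hn
      exact lt_of_le_of_lt (Nat.le_ceil _) h1
    calc C = (2 * C / ε) * (ε / 2) := by field_simp
      _ < (n : ℝ) * (ε / 2) := by
          apply mul_lt_mul_of_pos_right hN (by linarith)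
      _ = ε / 2 * n := by ring
  calc ‖_‖ / (n:ℝ) ≤ (C + n * d) / n := by gcongr
    _ = C / n + d := by field_simp
    _ < ε / 2 + ε / 2 := by linarith
    _ = ε := by ring
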